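/- arXiv:2305.06887 — 2 statements merged into one kernel-verified Lean document; each statement's English description precedes it below -/
import Mathlib

section
/- Let 𝒵, 𝒳, 𝒰 be finite alphabets and, for each n, let (Z^n, X^n, U^n) be random sequences taking values in 𝒵^n × 𝒳^n × 𝒰^n satisfying the Markov condition U^n → X^n → Z^n. Let {Ψ_n}_{n=1}^∞ be a sequence of mappings Ψ_n : 𝒵^n × 𝒰^n → {0,1} such that lim_{n→∞} P(Ψ_n(Z^n, U^n) = 1) = 0. Then for every ε > 0 there exists a sequence {f_n}_{n=1}^∞ of deterministic mappings f_n : 𝒳^n → {u_1^n, …, u_M^n} ⊆ 𝒰^n with M = ⌈e^{n(Ī(U;X)+ε)}⌉ such that lim_{n→∞} P(Ψ_n(Z^n, f_n(X^n)) = 1) = 0. -/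
open Filter

noncomputable section

/-- A probability mass function on a finite type, given as a real-valued function. -/
def IsPMF {Ω : Type*} [Fintype Ω] (μ : Ω → ℝ) : Prop :=
  (∀ ω, 0 ≤ μ ω) ∧ ∑ ω, μ ω = 1

/-- Probability of an event under a pmf. -/
def prEv {Ω : Type*} [Fintype Ω] (μ : Ω → ℝ) (S : Set Ω) : ℝ :=
  ∑ ω, S.indicator μ ω

/-- `p-limsup` of a sequence of real random variables `Z n` on finite sample spaces
with laws `μ n`. -/
def pLimsupF {Ω : ℕ → Type*} [∀ n, Fintype (Ω n)]
    (μ : ∀ n, Ω n → ℝ) (Z : ∀ n, Ω n → ℝ) : ℝ :=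
  sInf {α : ℝ | Tendsto (fun n => prEv (μ n) {ω | α < Z n ω}) atTop (nhds 0)}

private lemma prEv_nonneg {Ω : Type*} [Fintype Ω] {μ : Ω → ℝ}
    (h : ∀ ω, 0 ≤ μ ω) (S : Set Ω) : 0 ≤ prEv μ S :=
  Finset.sum_nonneg fun ω _ => Set.indicator_nonneg (fun ω _ => h ω) ω

private lemma prEv_mono {Ω : Type*} [Fintype Ω] {μ : Ω → ℝ}
    (h : ∀ ω, 0 ≤ μ ω) {S T : Set Ω} (hST : S ⊆ T) : prEv μ S ≤ prEv μ T :=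
  Finset.sum_le_sum fun ω _ => Set.indicator_le_indicator_of_subset hST (fun ω => h ω) ω

private lemma exists_le_avg {C : Type*} [Fintype C] (ν F : C → ℝ)
    (hν : ∀ c, 0 ≤ ν c) (hν1 : ∑ c, ν c = 1) :
    ∃ c, F c ≤ ∑ c, ν c * F c := by
  by_contra h
  push_neg at h
  obtain ⟨c0, hc0⟩ : ∃ c, 0 < ν c := by
    by_contra h'
    push_neg at h'
    have h0 : ∑ c, ν c = 0 := Finset.sum_eq_zero fun c _ => le_antisymm (h' c) (hν c)
    rw [h0] at hν1; norm_num at hν1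
  have h1 : ∑ c, ν c * (∑ c', ν c' * F c') < ∑ c, ν c * F c := by
    apply Finset.sum_lt_sum
    · intro i _; exact mul_le_mul_of_nonneg_left (h i).le (hν i)
    · exact ⟨c0, Finset.mem_univ c0, mul_lt_mul_of_pos_left (h c0) hc0⟩
  rw [← Finset.sum_mul, hν1, one_mul] at h1
  exact lt_irrefl _ h1

private lemma pow_le_exp_add {q s r t0 : ℝ} (M : ℕ)
    (hq0 : 0 ≤ q) (hq1 : q ≤ 1) (hs : 0 ≤ s) (hr : 0 < r)
    (hq : r * (1 - s) ≤ q) (hM : t0 ≤ M * r) (ht0 : 0 ≤ t0) :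
    (1 - q) ^ M ≤ Real.exp (-(t0 / 2)) + 2 * s := by
  rcases le_or_gt (1/2 : ℝ) s with hs2 | hs2
  · calc (1 - q)^M ≤ 1^M := pow_le_pow_left₀ (by linarith) (by linarith) M
    _ = 1 := one_pow M
    _ ≤ 2*s := by linarith
    _ ≤ _ := le_add_of_nonneg_left (Real.exp_nonneg _)
  · have h1 : t0 / 2 ≤ M * q := by
      have h2 : t0 * (1 - s) ≤ (M * r) * (1 - s) := mul_le_mul_of_nonneg_right hM (by linarith)
      have h3 : (M:ℝ) * (r * (1-s)) ≤ (M:ℝ) * q := mul_le_mul_of_nonneg_left hq (Nat.cast_nonneg M)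
      nlinarith
    calc (1 - q)^M ≤ (Real.exp (-q))^M :=
          pow_le_pow_left₀ (by linarith) (by nlinarith [Real.add_one_le_exp (-q)]) M
    _ = Real.exp ((M : ℝ) * (-q)) := (Real.exp_nat_mul _ M).symm
    _ ≤ Real.exp (-(t0/2)) := Real.exp_le_exp.2 (by linarith)
    _ ≤ _ := le_add_of_nonneg_right (by linarith)

private lemma prEv_eq_triple_sum {Un Xn Zn : Type*} [Fintype Un] [Fintype Xn] [Fintype Zn]
    (μ : Un × Xn × Zn → ℝ) (S : Set (Un × Xn × Zn)) :
    prEv μ S = ∑ u, ∑ x, ∑ z, S.indicator μ (u, x, z) := by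
  simp [prEv, Fintype.sum_prod_type]

private lemma prEv_eq_pair_sum {Xn Zn : Type*} [Fintype Xn] [Fintype Zn]
    (μ : Xn × Zn → ℝ) (S : Set (Xn × Zn)) :
    prEv μ S = ∑ x, ∑ z, S.indicator μ (x, z) := by
  simp [prEv, Fintype.sum_prod_type]

private lemma codebook_exists {A B C : Type*} [Fintype A] [Fintype B] [Fintype C]
    (P : A × C → ℝ) (hP : IsPMF P)
    (W : A → B → ℝ) (hW : ∀ a, IsPMF (W a))
    (PU : B → ℝ) (hPU : ∀ b, PU b = ∑ a, (∑ c, P (a, c)) * W a b)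
    (Ψ : C × B → Bool)
    (M : ℕ) (hM1 : 0 < M)
    (E γ t0 : ℝ) (hE : 0 < E) (hγ : 0 < γ) (ht0 : 0 ≤ t0)
    (hMe : t0 ≤ M * E⁻¹) :
    ∃ (f : A → B) (cb : Finset B), (∀ a, f a ∈ cb) ∧ cb.card ≤ M ∧
      (∑ a, ∑ c, if Ψ (c, f a) = true then P (a, c) else 0) ≤
        γ + Real.exp (-(t0 / 2))
        + 2 * (∑ a, ∑ b, ((∑ c, P (a, c)) * W a b) * (if W a b ≤ E * PU b then 0 else 1))
        + (2 / γ) * (∑ a, ∑ b, W a b * (∑ c, if Ψ (c, b) = true then P (a, c) else 0)) := by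
  classical
  obtain ⟨hP0, hPsum⟩ := hP
  have hW0 : ∀ a b, 0 ≤ W a b := fun a b => (hW a).1 b
  have hWsum : ∀ a, ∑ b, W a b = 1 := fun a => (hW a).2
  set PX : A → ℝ := fun a => ∑ c, P (a, c) with hPXdef
  have hPX0 : ∀ a, 0 ≤ PX a := fun a => Finset.sum_nonneg fun c _ => hP0 _
  have hPXsum : ∑ a, PX a = 1 := by rw [← hPsum, Fintype.sum_prod_type]
  have hPU0 : ∀ b, 0 ≤ PU b := fun b => by
    rw [hPU b]
    exact Finset.sum_nonneg fun a _ => mul_nonneg (hPX0 a) (hW0 a b)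
  have hPUsum : ∑ b, PU b = 1 := by
    have h1 : ∑ b, PU b = ∑ b, ∑ a, PX a * W a b := Finset.sum_congr rfl fun b _ => hPU b
    rw [h1, Finset.sum_comm]
    have h2 : ∀ a ∈ Finset.univ, ∑ b, PX a * W a b = PX a := by
      intro a _; rw [← Finset.mul_sum, hWsum, mul_one]
    rw [Finset.sum_congr rfl h2, hPXsum]
  set e : A → B → ℝ := fun a b => ∑ c, if Ψ (c, b) = true then P (a, c) else 0 with hedef
  have he0 : ∀ a b, 0 ≤ e a b := fun a b =>
    Finset.sum_nonneg fun c _ => by split <;> simp [hP0]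
  have hePX : ∀ a b, e a b ≤ PX a := fun a b =>
    Finset.sum_le_sum fun c _ => by split <;> simp [hP0 (a, c)]
  -- the good set
  set Bs : A → Finset B := fun a =>
    Finset.univ.filter (fun b => W a b ≤ E * PU b ∧ e a b ≤ γ * PX a) with hBsdef
  set q : A → ℝ := fun a => ∑ b ∈ Bs a, PU b with hqdef
  have hq0 : ∀ a, 0 ≤ q a := fun a => Finset.sum_nonneg fun b _ => hPU0 b
  have hq1 : ∀ a, q a ≤ 1 := fun a => by
    rw [← hPUsum]
    exact Finset.sum_le_sum_of_subset_of_nonneg (Finset.subset_univ _) fun b _ _ => hPU0 b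
  set w1 : A → ℝ := fun a => ∑ b, W a b * (if W a b ≤ E * PU b then 0 else 1) with hw1def
  set w2 : A → ℝ := fun a => ∑ b, W a b * (if e a b ≤ γ * PX a then 0 else 1) with hw2def
  have hw10 : ∀ a, 0 ≤ w1 a := fun a => Finset.sum_nonneg fun b _ => by
    apply mul_nonneg (hW0 a b); split <;> norm_num
  have hw20 : ∀ a, 0 ≤ w2 a := fun a => Finset.sum_nonneg fun b _ => by
    apply mul_nonneg (hW0 a b); split <;> norm_num
  -- q a is not too small
  have hqlow : ∀ a, E⁻¹ * (1 - (w1 a + w2 a)) ≤ q a := by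
    intro a
    have hsplit : ∑ b ∈ Bs a, W a b + ∑ b ∈ (Bs a)ᶜ, W a b = 1 := by
      rw [Finset.sum_add_sum_compl]; exact hWsum a
    have hcomp : ∑ b ∈ (Bs a)ᶜ, W a b ≤ w1 a + w2 a := by
      have hle : ∑ b ∈ (Bs a)ᶜ, W a b ≤
          ∑ b ∈ (Bs a)ᶜ, (W a b * (if W a b ≤ E * PU b then 0 else 1)
            + W a b * (if e a b ≤ γ * PX a then 0 else 1)) := by
        apply Finset.sum_le_sum
        intro b hb
        rw [Finset.mem_compl, hBsdef, Finset.mem_filter] at hb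
        push_neg at hb
        by_cases h1 : W a b ≤ E * PU b
        · have h2 : ¬ e a b ≤ γ * PX a := not_le.2 (hb (Finset.mem_univ b) h1)
          rw [if_pos h1, if_neg h2]
          nlinarith [hW0 a b]
        · rw [if_neg h1]
          have : (0:ℝ) ≤ W a b * (if e a b ≤ γ * PX a then 0 else 1) := by
            apply mul_nonneg (hW0 a b); split <;> norm_num
          nlinarith [hW0 a b]
      refine hle.trans ?_
      have hsub : ∑ b ∈ (Bs a)ᶜ, (W a b * (if W a b ≤ E * PU b then 0 else 1)
            + W a b * (if e a b ≤ γ * PX a then 0 else 1)) ≤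
          ∑ b, (W a b * (if W a b ≤ E * PU b then 0 else 1)
            + W a b * (if e a b ≤ γ * PX a then 0 else 1)) := by
        apply Finset.sum_le_sum_of_subset_of_nonneg (Finset.subset_univ _)
        intro b _ _
        have u1 : (0:ℝ) ≤ W a b * (if W a b ≤ E * PU b then 0 else 1) := by
          apply mul_nonneg (hW0 a b); split <;> norm_num
        have u2 : (0:ℝ) ≤ W a b * (if e a b ≤ γ * PX a then 0 else 1) := by
          apply mul_nonneg (hW0 a b); split <;> norm_num
        linarith
      refine hsub.trans ?_
      rw [Finset.sum_add_distrib]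
    have hWB : 1 - (w1 a + w2 a) ≤ ∑ b ∈ Bs a, W a b := by linarith
    have hEq : ∑ b ∈ Bs a, W a b ≤ E * q a := by
      rw [hqdef, Finset.mul_sum]
      apply Finset.sum_le_sum
      intro b hb
      rw [hBsdef, Finset.mem_filter] at hb
      exact hb.2.1
    have := hWB.trans hEq
    calc E⁻¹ * (1 - (w1 a + w2 a)) ≤ E⁻¹ * (E * q a) :=
          mul_le_mul_of_nonneg_left this (inv_nonneg.2 hE.le)
    _ = q a := by field_simp
  -- codebook distribution
  set ν : (Fin M → B) → ℝ := fun c => ∏ i, PU (c i) with hνdef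
  have hν0 : ∀ c, 0 ≤ ν c := fun c => Finset.prod_nonneg fun i _ => hPU0 _
  have hν1 : ∑ c, ν c = 1 := by
    rw [hνdef, ← Fintype.sum_pow, hPUsum, one_pow]
  -- decoder
  set fdec : (Fin M → B) → A → B := fun c a =>
    if h : ∃ i, c i ∈ Bs a then c h.choose else c ⟨0, hM1⟩ with hfdef
  -- the key expectation identity
  have hexp : ∀ a, (∑ c, ν c * (if ∃ i, c i ∈ Bs a then 0 else 1)) = (1 - q a) ^ M := by
    intro a
    have h1 : ∀ c : Fin M → B, ν c * (if ∃ i, c i ∈ Bs a then 0 else 1)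
        = ∏ i, (if c i ∈ Bs a then 0 else PU (c i)) := by
      intro c
      by_cases h : ∃ i, c i ∈ Bs a
      · rw [if_pos h, mul_zero]
        obtain ⟨i, hi⟩ := h
        rw [eq_comm]
        exact Finset.prod_eq_zero (Finset.mem_univ i) (by rw [if_pos hi])
      · push_neg at h
        rw [if_neg (not_exists.2 h), mul_one, hνdef]
        exact Finset.prod_congr rfl fun i _ => by rw [if_neg (h i)]
    have h4 : (∑ c : Fin M → B, ν c * (if ∃ i, c i ∈ Bs a then 0 else 1))
        = (∑ b, if b ∈ Bs a then (0:ℝ) else PU b) ^ M := by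
      rw [Fintype.sum_pow]
      refine Finset.sum_congr rfl fun c _ => ?_
      rw [h1 c]
    rw [h4]
    congr 1
    have h2 : ∑ b, (if b ∈ Bs a then (0:ℝ) else PU b)
        = ∑ b, (PU b - (if b ∈ Bs a then PU b else 0)) := by
      apply Finset.sum_congr rfl; intro b _; split <;> simp
    rw [h2, Finset.sum_sub_distrib, hPUsum, Finset.sum_ite_mem, Finset.univ_inter]
  -- pointwise error bound for a fixed codebook
  have hGb : ∀ c, (∑ a, e a (fdec c a)) ≤
      ∑ a, (γ * PX a + PX a * (if ∃ i, c i ∈ Bs a then 0 else 1)) := by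
    intro c
    apply Finset.sum_le_sum
    intro a _
    by_cases h : ∃ i, c i ∈ Bs a
    · have hmem := h.choose_spec
      have hmem2 : W a (c h.choose) ≤ E * PU (c h.choose) ∧ e a (c h.choose) ≤ γ * PX a :=
        (Finset.mem_filter.1 hmem).2
      have hfa : fdec c a = c h.choose := dif_pos h
      have hgoal : e a (c h.choose) ≤ γ * PX a + PX a * (if ∃ i, c i ∈ Bs a then 0 else 1) := by
        rw [if_pos h, mul_zero, add_zero]
        exact hmem2.2
      exact (congrArg (e a) hfa).le.trans hgoal
    · have hfa : fdec c a = c ⟨0, hM1⟩ := dif_neg h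
      have hgoal : e a (c ⟨0, hM1⟩) ≤ γ * PX a + PX a * (if ∃ i, c i ∈ Bs a then 0 else 1) := by
        rw [if_neg h, mul_one]
        have := hePX a (c ⟨0, hM1⟩)
        nlinarith [hPX0 a, mul_nonneg hγ.le (hPX0 a)]
      exact (congrArg (e a) hfa).le.trans hgoal
  -- average the bound
  have havg : (∑ c, ν c * (∑ a, e a (fdec c a))) ≤
      γ + Real.exp (-(t0 / 2)) + 2 * (∑ a, PX a * w1 a) + 2 * (∑ a, PX a * w2 a) := by
    have s1 : (∑ c, ν c * (∑ a, e a (fdec c a))) ≤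
        ∑ c, ν c * (∑ a, (γ * PX a + PX a * (if ∃ i, c i ∈ Bs a then 0 else 1))) :=
      Finset.sum_le_sum fun c _ => mul_le_mul_of_nonneg_left (hGb c) (hν0 c)
    have s2 : (∑ c, ν c * (∑ a, (γ * PX a + PX a * (if ∃ i, c i ∈ Bs a then 0 else 1))))
        = ∑ a, (γ * PX a + PX a * (1 - q a) ^ M) := by
      simp_rw [Finset.mul_sum]
      rw [Finset.sum_comm]
      apply Finset.sum_congr rfl
      intro a _
      simp_rw [mul_add, Finset.sum_add_distrib, ← Finset.sum_mul, hν1, one_mul]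
      congr 1
      rw [← hexp a, Finset.mul_sum]
      apply Finset.sum_congr rfl
      intro c _
      ring
    have s3 : ∀ a, PX a * (1 - q a) ^ M ≤
        PX a * (Real.exp (-(t0 / 2)) + 2 * (w1 a + w2 a)) := by
      intro a
      apply mul_le_mul_of_nonneg_left _ (hPX0 a)
      exact pow_le_exp_add M (hq0 a) (hq1 a) (add_nonneg (hw10 a) (hw20 a))
        (inv_pos.2 hE) (hqlow a) hMe ht0
    calc (∑ c, ν c * (∑ a, e a (fdec c a)))
        ≤ ∑ a, (γ * PX a + PX a * (1 - q a) ^ M) := by rw [← s2]; exact s1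
    _ ≤ ∑ a, (γ * PX a + PX a * (Real.exp (-(t0 / 2)) + 2 * (w1 a + w2 a))) :=
        Finset.sum_le_sum fun a _ => by linarith [s3 a]
    _ = γ + Real.exp (-(t0 / 2)) + 2 * (∑ a, PX a * w1 a) + 2 * (∑ a, PX a * w2 a) := by
        have expand : ∀ a : A, γ * PX a + PX a * (Real.exp (-(t0 / 2)) + 2 * (w1 a + w2 a))
            = γ * PX a + (Real.exp (-(t0 / 2)) * PX a
              + (2 * (PX a * w1 a) + 2 * (PX a * w2 a))) := fun a => by ring
        rw [Finset.sum_congr rfl fun a _ => expand a, Finset.sum_add_distrib,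
          Finset.sum_add_distrib, Finset.sum_add_distrib, ← Finset.mul_sum, ← Finset.mul_sum,
          ← Finset.mul_sum, ← Finset.mul_sum, hPXsum]
        ring
  -- pick a good codebook
  obtain ⟨c, hc⟩ := exists_le_avg ν (fun c => ∑ a, e a (fdec c a)) hν0 hν1
  refine ⟨fdec c, Finset.image c Finset.univ, ?_, ?_, ?_⟩
  · intro a
    rw [hfdef]
    by_cases h : ∃ i, c i ∈ Bs a
    · simp only [dif_pos h]; exact Finset.mem_image_of_mem c (Finset.mem_univ _)
    · simp only [dif_neg h]; exact Finset.mem_image_of_mem c (Finset.mem_univ _)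
  · calc (Finset.image c Finset.univ).card ≤ Finset.univ.card := Finset.card_image_le
    _ = M := by simp
  · -- final bound
    have hT : ∑ a, PX a * w1 a = ∑ a, ∑ b, ((∑ c', P (a, c')) * W a b) * (if W a b ≤ E * PU b then 0 else 1) := by
      apply Finset.sum_congr rfl
      intro a _
      rw [hw1def, Finset.mul_sum]
      apply Finset.sum_congr rfl
      intro b _
      ring
    have hD : ∀ a, PX a * w2 a ≤ (1 / γ) * (∑ b, W a b * e a b) := by
      intro a
      have h1 : PX a * w2 a = ∑ b, PX a * (W a b * (if e a b ≤ γ * PX a then 0 else 1)) :=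
        Finset.mul_sum _ _ _
      have h2 : (1 / γ) * (∑ b, W a b * e a b) = ∑ b, (1 / γ) * (W a b * e a b) :=
        Finset.mul_sum _ _ _
      rw [h1, h2]
      apply Finset.sum_le_sum
      intro b _
      by_cases h : e a b ≤ γ * PX a
      · rw [if_pos h, mul_zero, mul_zero]
        have h3 := mul_nonneg (hW0 a b) (he0 a b)
        have h4 : (0:ℝ) < 1 / γ := by positivity
        nlinarith
      · rw [if_neg h, mul_one]
        push_neg at h
        have h2' : PX a ≤ (1 / γ) * e a b := by
          rw [one_div, ← div_eq_inv_mul, le_div_iff₀ hγ, mul_comm]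
          exact h.le
        calc PX a * W a b ≤ ((1 / γ) * e a b) * W a b :=
              mul_le_mul_of_nonneg_right h2' (hW0 a b)
        _ = (1 / γ) * (W a b * e a b) := by ring
    have hD2 : 2 * (∑ a, PX a * w2 a) ≤ (2 / γ) * (∑ a, ∑ b, W a b * e a b) := by
      have h1 : ∑ a, PX a * w2 a ≤ ∑ a, (1 / γ) * (∑ b, W a b * e a b) :=
        Finset.sum_le_sum fun a _ => hD a
      have h2 : ∑ a, (1 / γ) * (∑ b, W a b * e a b)
          = (1 / γ) * ∑ a, ∑ b, W a b * e a b := (Finset.mul_sum _ _ _).symm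
      rw [h2] at h1
      have h3 : (2 / γ) * (∑ a, ∑ b, W a b * e a b)
          = 2 * ((1 / γ) * ∑ a, ∑ b, W a b * e a b) := by ring
      rw [h3]
      linarith
    have herr : (∑ a, e a (fdec c a)) ≤
        γ + Real.exp (-(t0 / 2)) + 2 * (∑ a, PX a * w1 a) + 2 * (∑ a, PX a * w2 a) :=
      hc.trans havg
    calc (∑ a, ∑ c', if Ψ (c', fdec c a) = true then P (a, c') else 0)
        = ∑ a, e a (fdec c a) := rfl
    _ ≤ γ + Real.exp (-(t0 / 2)) + 2 * (∑ a, PX a * w1 a) + 2 * (∑ a, PX a * w2 a) := herr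
    _ ≤ γ + Real.exp (-(t0 / 2))
        + 2 * (∑ a, ∑ b, ((∑ c', P (a, c')) * W a b) * (if W a b ≤ E * PU b then 0 else 1))
        + (2 / γ) * (∑ a, ∑ b, W a b * e a b) := by
        rw [hT]
        linarith [hD2]
    _ = _ := rfl

/-- **Lemma (Iwata–Muramatsu).** If `U^n → X^n → Z^n` is a Markov chain (here `U^n` is
generated from `X^n` by the conditional pmf `W n`, and `(X^n, Z^n)` has joint law `PXZ n`)
and `Ψ n` is a sequence of binary maps with `P(Ψ n (Z^n, U^n) = 1) → 0`, then for every
`ε > 0` there are deterministic maps `f n : 𝒳^n → 𝒰^n` whose range has at most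
`⌈e^{n(Ī(U;X)+ε)}⌉` elements and with `P(Ψ n (Z^n, f n (X^n)) = 1) → 0`. -/
theorem iwata_muramatsu_lemma
    {𝒵 𝒳 𝒰 : Type*} [Fintype 𝒵] [Fintype 𝒳] [Fintype 𝒰]
    (PXZ : ∀ n : ℕ, (Fin n → 𝒳) × (Fin n → 𝒵) → ℝ) (hPXZ : ∀ n, IsPMF (PXZ n))
    (W : ∀ n : ℕ, (Fin n → 𝒳) → (Fin n → 𝒰) → ℝ) (hW : ∀ n x, IsPMF (W n x))
    -- joint law of (U^n, X^n, Z^n); the factorization encodes the Markov chain U → X → Z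
    (μ : ∀ n : ℕ, (Fin n → 𝒰) × (Fin n → 𝒳) × (Fin n → 𝒵) → ℝ)
    (hμ : ∀ n u x z, μ n (u, x, z) = PXZ n (x, z) * W n x u)
    -- marginal law of U^n
    (PU : ∀ n : ℕ, (Fin n → 𝒰) → ℝ)
    (hPU : ∀ n u, PU n u = ∑ x, (∑ z, PXZ n (x, z)) * W n x u)
    (Ψ : ∀ n : ℕ, (Fin n → 𝒵) × (Fin n → 𝒰) → Bool)
    (hΨ : Tendsto (fun n => prEv (μ n) {ω | Ψ n (ω.2.2, ω.1) = true}) atTop (nhds 0)) :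
    ∀ ε > (0 : ℝ), ∃ (f : ∀ n : ℕ, (Fin n → 𝒳) → (Fin n → 𝒰))
      (Cb : ∀ n : ℕ, Finset (Fin n → 𝒰)),
      (∀ n x, f n x ∈ Cb n) ∧
      (∀ n : ℕ, (Cb n).card ≤
        ⌈Real.exp (n * (pLimsupF μ
          (fun n ω => (1 / (n : ℝ)) * Real.log (W n ω.2.1 ω.1 / PU n ω.1)) + ε))⌉₊) ∧
      Tendsto (fun n => prEv (PXZ n) {p | Ψ n (p.2, f n p.1) = true}) atTop (nhds 0) := by
  classical
  intro ε hε
  -- nonemptiness of the alphabets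
  rcases isEmpty_or_nonempty 𝒳 with h𝒳 | h𝒳
  · exfalso
    have h := (hPXZ 1).2
    haveI : IsEmpty ((Fin 1 → 𝒳) × (Fin 1 → 𝒵)) := by infer_instance
    rw [Finset.univ_eq_empty, Finset.sum_empty] at h
    exact one_ne_zero h.symm
  rcases isEmpty_or_nonempty 𝒵 with h𝒵 | h𝒵
  · exfalso
    have h := (hPXZ 1).2
    haveI : IsEmpty ((Fin 1 → 𝒳) × (Fin 1 → 𝒵)) := by infer_instance
    rw [Finset.univ_eq_empty, Finset.sum_empty] at h
    exact one_ne_zero h.symm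
  rcases isEmpty_or_nonempty 𝒰 with h𝒰 | h𝒰
  · exfalso
    obtain ⟨x⟩ : Nonempty (Fin 1 → 𝒳) := inferInstance
    have h := (hW 1 x).2
    haveI : IsEmpty (Fin 1 → 𝒰) := by infer_instance
    rw [Finset.univ_eq_empty, Finset.sum_empty] at h
    exact one_ne_zero h.symm
  -- basic facts
  have hμ0 : ∀ n ω, 0 ≤ μ n ω := by
    intro n ω
    obtain ⟨u, x, z⟩ := ω
    rw [hμ]
    exact mul_nonneg ((hPXZ n).1 _) ((hW n x).1 u)
  have hPX0 : ∀ n x, 0 ≤ ∑ z, PXZ n (x, z) :=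
    fun n x => Finset.sum_nonneg fun z _ => (hPXZ n).1 _
  have hPXsum : ∀ n, ∑ x, ∑ z, PXZ n (x, z) = 1 := by
    intro n; rw [← (hPXZ n).2, Fintype.sum_prod_type]
  have hPU0 : ∀ n u, 0 ≤ PU n u := fun n u => by
    rw [hPU]
    exact Finset.sum_nonneg fun x _ => mul_nonneg (hPX0 n x) ((hW n x).1 u)
  have hPUub : ∀ n (x : Fin n → 𝒳) u, (∑ z, PXZ n (x, z)) * W n x u ≤ PU n u := by
    intro n x u
    rw [hPU]
    exact Finset.single_le_sum
      (f := fun x' => (∑ z, PXZ n (x', z)) * W n x' u)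
      (fun x' _ => mul_nonneg (hPX0 n x') ((hW n x').1 u)) (Finset.mem_univ x)
  have hPUsum : ∀ n, ∑ u, PU n u = 1 := by
    intro n
    have h1 : ∑ u, PU n u = ∑ u, ∑ x, (∑ z, PXZ n (x, z)) * W n x u :=
      Finset.sum_congr rfl fun u _ => hPU n u
    rw [h1, Finset.sum_comm]
    have h2 : ∀ x ∈ (Finset.univ : Finset (Fin n → 𝒳)),
        ∑ u, (∑ z, PXZ n (x, z)) * W n x u = ∑ z, PXZ n (x, z) := by
      intro x _; rw [← Finset.mul_sum, (hW n x).2, mul_one]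
    rw [Finset.sum_congr rfl h2, hPXsum n]
  have hμsum : ∀ n, ∑ ω, μ n ω = 1 := by
    intro n
    have h1 : ∑ ω, μ n ω = ∑ u, ∑ x, ∑ z, PXZ n (x, z) * W n x u := by
      rw [Fintype.sum_prod_type]
      refine Finset.sum_congr rfl fun u _ => ?_
      rw [Fintype.sum_prod_type]
      exact Finset.sum_congr rfl fun x _ => Finset.sum_congr rfl fun z _ => hμ n u x z
    rw [h1, Finset.sum_comm]
    have h2 : ∀ x ∈ (Finset.univ : Finset (Fin n → 𝒳)),
        ∑ u, ∑ z, PXZ n (x, z) * W n x u = ∑ z, PXZ n (x, z) := by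
      intro x _
      rw [Finset.sum_comm]
      have h3 : ∀ z ∈ (Finset.univ : Finset (Fin n → 𝒵)),
          ∑ u, PXZ n (x, z) * W n x u = PXZ n (x, z) := by
        intro z _; rw [← Finset.mul_sum, (hW n x).2, mul_one]
      rw [Finset.sum_congr rfl h3]
    rw [Finset.sum_congr rfl h2, hPXsum n]
  have hμlePU : ∀ n (u : Fin n → 𝒰) x z, μ n (u, x, z) ≤ PU n u := by
    intro n u x z
    rw [hμ n u x z]
    calc PXZ n (x, z) * W n x u ≤ (∑ z', PXZ n (x, z')) * W n x u :=
          mul_le_mul_of_nonneg_right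
            (Finset.single_le_sum (f := fun z' => PXZ n (x, z'))
              (fun z' _ => (hPXZ n).1 (x, z')) (Finset.mem_univ z)) ((hW n x).1 u)
    _ ≤ PU n u := hPUub n x u
  -- the information-density random variables and the limsup set
  set Zi : ∀ n : ℕ, ((Fin n → 𝒰) × (Fin n → 𝒳) × (Fin n → 𝒵)) → ℝ :=
    fun n ω => (1 / (n : ℝ)) * Real.log (W n ω.2.1 ω.1 / PU n ω.1) with hZidef
  set S : Set ℝ :=
    {α : ℝ | Tendsto (fun n => prEv (μ n) {ω | α < Zi n ω}) atTop (nhds 0)} with hSdef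
  -- S is upward closed
  have hmono : ∀ s t : ℝ, s ≤ t → s ∈ S → t ∈ S := by
    intro s t hst hs
    refine squeeze_zero' (Eventually.of_forall fun n => prEv_nonneg (hμ0 n) _)
      (Eventually.of_forall fun n => prEv_mono (hμ0 n) fun ω hω => ?_) hs
    exact Set.mem_setOf_eq ▸ lt_of_le_of_lt hst hω
  -- S is nonempty
  set k : ℝ := ((Fintype.card 𝒰 * Fintype.card 𝒳 * Fintype.card 𝒵 : ℕ) : ℝ) with hkdef
  have hk1 : (1 : ℝ) ≤ k := by
    have hc : 0 < Fintype.card 𝒰 * Fintype.card 𝒳 * Fintype.card 𝒵 :=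
      mul_pos (mul_pos Fintype.card_pos Fintype.card_pos) Fintype.card_pos
    have h1c : 1 ≤ Fintype.card 𝒰 * Fintype.card 𝒳 * Fintype.card 𝒵 := hc
    rw [hkdef]
    exact_mod_cast h1c
  have hS1 : (Real.log k + 1) ∈ S := by
    have hr : k * Real.exp (-(Real.log k + 1)) = Real.exp (-1) := by
      rw [neg_add, Real.exp_add, Real.exp_neg, Real.exp_log (by linarith)]
      field_simp
    refine squeeze_zero' (g := fun n : ℕ => (Real.exp (-1)) ^ n)
      (Eventually.of_forall fun n => prEv_nonneg (hμ0 n) _) ?_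
      (tendsto_pow_atTop_nhds_zero_of_lt_one (Real.exp_nonneg _)
        (Real.exp_lt_one_iff.2 (by norm_num)))
    filter_upwards [eventually_ge_atTop 1] with n hn
    have hterm : ∀ ω : (Fin n → 𝒰) × (Fin n → 𝒳) × (Fin n → 𝒵),
        Set.indicator {ω | Real.log k + 1 < Zi n ω} (μ n) ω
          ≤ Real.exp (-((n : ℝ) * (Real.log k + 1))) := by
      intro ω
      obtain ⟨u, x, z⟩ := ω
      rw [Set.indicator_apply]
      split
      case isTrue hin =>
        rcases le_or_gt (μ n (u, x, z)) 0 with hμle | hμpos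
        · exact hμle.trans (Real.exp_nonneg _)
        · have hin' : Real.log k + 1 < (1 / (n : ℝ)) * Real.log (W n x u / PU n u) := hin
          have hW0' := (hW n x).1 u
          have hWpos : 0 < W n x u := by
            rcases hW0'.lt_or_eq with h | h
            · exact h
            · exfalso; rw [hμ n u x z, ← h, mul_zero] at hμpos; exact lt_irrefl _ hμpos
          have hPUpos : 0 < PU n u := lt_of_lt_of_le hμpos (hμlePU n u x z)
          have hn0 : (0 : ℝ) < n := by exact_mod_cast hn
          have hninv : (n : ℝ) * (1 / (n : ℝ)) = 1 := by field_simp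
          have hlog : (n : ℝ) * (Real.log k + 1) < Real.log (W n x u / PU n u) := by
            have h7 := mul_lt_mul_of_pos_left hin' hn0
            calc (n : ℝ) * (Real.log k + 1) < (n : ℝ) * ((1 / (n : ℝ)) * Real.log (W n x u / PU n u)) := h7
            _ = ((n : ℝ) * (1 / (n : ℝ))) * Real.log (W n x u / PU n u) := by ring
            _ = Real.log (W n x u / PU n u) := by rw [hninv, one_mul]
          have hexp : Real.exp ((n : ℝ) * (Real.log k + 1)) < W n x u / PU n u := by
            have h6 := Real.exp_lt_exp.2 hlog
            rwa [Real.exp_log (div_pos hWpos hPUpos)] at h6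
          have hW1 : W n x u ≤ 1 := by
            rw [← (hW n x).2]
            exact Finset.single_le_sum (fun u' _ => (hW n x).1 u') (Finset.mem_univ u)
          have h8 : Real.exp ((n : ℝ) * (Real.log k + 1)) * PU n u < 1 :=
            lt_of_lt_of_le (by nlinarith [(lt_div_iff₀ hPUpos).1 hexp]) hW1
          have hPUlt : PU n u < Real.exp (-((n : ℝ) * (Real.log k + 1))) := by
            rw [Real.exp_neg]
            nlinarith [inv_pos.2 (Real.exp_pos ((n : ℝ) * (Real.log k + 1))),
              mul_inv_cancel₀ (Real.exp_pos ((n : ℝ) * (Real.log k + 1))).ne']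
          linarith [hμlePU n u x z]
      case isFalse _ => exact Real.exp_nonneg _
    calc prEv (μ n) {ω | Real.log k + 1 < Zi n ω}
        ≤ ∑ _ω : (Fin n → 𝒰) × (Fin n → 𝒳) × (Fin n → 𝒵),
            Real.exp (-((n : ℝ) * (Real.log k + 1))) :=
          Finset.sum_le_sum fun ω _ => hterm ω
    _ = (Fintype.card ((Fin n → 𝒰) × (Fin n → 𝒳) × (Fin n → 𝒵)) : ℝ)
          * Real.exp (-((n : ℝ) * (Real.log k + 1))) := by
        rw [Finset.sum_const, Finset.card_univ, nsmul_eq_mul]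
    _ = (k * Real.exp (-(Real.log k + 1))) ^ n := by
        have hcard : (Fintype.card ((Fin n → 𝒰) × (Fin n → 𝒳) × (Fin n → 𝒵)) : ℝ) = k ^ n := by
          rw [hkdef, ← Nat.cast_pow]
          congr 1
          simp only [Fintype.card_prod, Fintype.card_fun, Fintype.card_fin]
          ring
        rw [hcard, mul_pow]
        congr 1
        rw [show -((n : ℝ) * (Real.log k + 1)) = (n : ℝ) * (-(Real.log k + 1)) by ring,
          Real.exp_nat_mul]
    _ = (Real.exp (-1)) ^ n := by rw [hr]
  -- S is bounded below by 0
  have hSlb : ∀ s ∈ S, (0 : ℝ) ≤ s := by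
    intro s hs
    by_contra hneg
    push_neg at hneg
    have hcompl : ∀ n : ℕ, 1 ≤ n →
        1 - Real.exp ((n : ℝ) * s) ≤ prEv (μ n) {ω | s < Zi n ω} := by
      intro n hn
      have hsplit : prEv (μ n) {ω | s < Zi n ω} + prEv (μ n) {ω | ¬ (s < Zi n ω)} = 1 := by
        simp only [prEv]
        rw [← Finset.sum_add_distrib, ← hμsum n]
        refine Finset.sum_congr rfl fun ω _ => ?_
        rw [Set.indicator_apply, Set.indicator_apply]
        simp only [Set.mem_setOf_eq]
        by_cases h : s < Zi n ω
        · rw [if_pos h, if_neg (not_not_intro h), add_zero]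
        · rw [if_neg h, if_pos h, zero_add]
      have hc : prEv (μ n) {ω | ¬ (s < Zi n ω)} ≤ Real.exp ((n : ℝ) * s) := by
        simp only [prEv]
        have hstep : ∀ ω : (Fin n → 𝒰) × (Fin n → 𝒳) × (Fin n → 𝒵),
            Set.indicator {ω | ¬ (s < Zi n ω)} (μ n) ω
              ≤ Real.exp ((n : ℝ) * s) * (PU n ω.1 * PXZ n (ω.2.1, ω.2.2)) := by
          intro ω
          obtain ⟨u, x, z⟩ := ω
          rw [Set.indicator_apply]
          split
          case isTrue hin =>
            simp only [Set.mem_setOf_eq, not_lt] at hin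
            rcases le_or_gt (μ n (u, x, z)) 0 with hμle | hμpos
            · refine hμle.trans ?_
              have := hPU0 n u
              have := (hPXZ n).1 (x, z)
              positivity
            · have hin' : (1 / (n : ℝ)) * Real.log (W n x u / PU n u) ≤ s := hin
              have hW0' := (hW n x).1 u
              have hWpos : 0 < W n x u := by
                rcases hW0'.lt_or_eq with h | h
                · exact h
                · exfalso; rw [hμ n u x z, ← h, mul_zero] at hμpos; exact lt_irrefl _ hμpos
              have hPUpos : 0 < PU n u := lt_of_lt_of_le hμpos (hμlePU n u x z)
              have hn0 : (0 : ℝ) < n := by exact_mod_cast hn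
              have hninv : (n : ℝ) * (1 / (n : ℝ)) = 1 := by field_simp
              have hlog : Real.log (W n x u / PU n u) ≤ (n : ℝ) * s := by
                have h7 := mul_le_mul_of_nonneg_left hin' hn0.le
                calc Real.log (W n x u / PU n u)
                    = ((n : ℝ) * (1 / (n : ℝ))) * Real.log (W n x u / PU n u) := by
                      rw [hninv, one_mul]
                _ = (n : ℝ) * ((1 / (n : ℝ)) * Real.log (W n x u / PU n u)) := by ring
                _ ≤ (n : ℝ) * s := h7
              have hdivle : W n x u / PU n u ≤ Real.exp ((n : ℝ) * s) := by
                have h6 := Real.exp_le_exp.2 hlog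
                rwa [Real.exp_log (div_pos hWpos hPUpos)] at h6
              have hWle : W n x u ≤ Real.exp ((n : ℝ) * s) * PU n u :=
                (div_le_iff₀ hPUpos).1 hdivle
              calc μ n (u, x, z) = PXZ n (x, z) * W n x u := hμ n u x z
              _ ≤ PXZ n (x, z) * (Real.exp ((n : ℝ) * s) * PU n u) :=
                  mul_le_mul_of_nonneg_left hWle ((hPXZ n).1 (x, z))
              _ = Real.exp ((n : ℝ) * s) * (PU n u * PXZ n (x, z)) := by ring
          case isFalse _ =>
            have := hPU0 n u
            have := (hPXZ n).1 (x, z)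
            positivity
        calc ∑ ω, Set.indicator {ω | ¬ (s < Zi n ω)} (μ n) ω
            ≤ ∑ ω : (Fin n → 𝒰) × (Fin n → 𝒳) × (Fin n → 𝒵),
                Real.exp ((n : ℝ) * s) * (PU n ω.1 * PXZ n (ω.2.1, ω.2.2)) :=
              Finset.sum_le_sum fun ω _ => hstep ω
        _ = Real.exp ((n : ℝ) * s) := by
            rw [← Finset.mul_sum]
            have hsum1 : ∑ ω : (Fin n → 𝒰) × (Fin n → 𝒳) × (Fin n → 𝒵),
                PU n ω.1 * PXZ n (ω.2.1, ω.2.2) = 1 := by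
              rw [Fintype.sum_prod_type]
              have h4 : ∀ u ∈ (Finset.univ : Finset (Fin n → 𝒰)),
                  (∑ p : (Fin n → 𝒳) × (Fin n → 𝒵), PU n u * PXZ n (p.1, p.2)) = PU n u := by
                intro u _
                rw [← Finset.mul_sum]
                have : ∑ p : (Fin n → 𝒳) × (Fin n → 𝒵), PXZ n (p.1, p.2) = 1 := by
                  rw [← (hPXZ n).2]
                rw [this, mul_one]
              rw [Finset.sum_congr rfl h4, hPUsum n]
            rw [hsum1, mul_one]
      linarith [hsplit, hc]
    have hexps : ∀ n : ℕ, 1 ≤ n → Real.exp ((n : ℝ) * s) ≤ Real.exp s := by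
      intro n hn
      apply Real.exp_le_exp.2
      have h1 : (1 : ℝ) ≤ n := by exact_mod_cast hn
      nlinarith
    have hpos1 : 0 < 1 - Real.exp s := by
      have := Real.exp_lt_one_iff.2 hneg
      linarith
    have hev := (hs.eventually (gt_mem_nhds hpos1)).and (eventually_ge_atTop 1)
    obtain ⟨n, hn1, hn2⟩ := hev.exists
    have := hcompl n hn2
    have := hexps n hn2
    linarith
  have hSne : S.Nonempty := ⟨Real.log k + 1, hS1⟩
  have hSbdd : BddBelow S := ⟨0, fun s hs => hSlb s hs⟩
  -- the threshold Iq + ε/2 lies in S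
  set Iq : ℝ := pLimsupF μ Zi with hIqdef
  have hIqInf : Iq = sInf S := rfl
  have hαS : (Iq + ε / 2) ∈ S := by
    have hlt : sInf S < Iq + ε / 2 := by
      rw [← hIqInf]; linarith [half_pos hε]
    obtain ⟨s, hsS, hslt⟩ := (csInf_lt_iff hSbdd hSne).1 hlt
    exact hmono s _ hslt.le hsS
  -- error and bound sequences
  set δ : ℕ → ℝ := fun n => prEv (μ n) {ω | Ψ n (ω.2.2, ω.1) = true} with hδdef
  have hδ0 : ∀ n, 0 ≤ δ n := fun n => prEv_nonneg (hμ0 n) _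
  have hδlim : Tendsto δ atTop (nhds 0) := hΨ
  set γq : ℕ → ℝ := fun n => Real.sqrt (δ n) + 1 / ((n : ℝ) + 1) with hγdef
  have hγpos : ∀ n, 0 < γq n := fun n =>
    add_pos_of_nonneg_of_pos (Real.sqrt_nonneg _) (by positivity)
  set pE : ℕ → ℝ := fun n => prEv (μ n) {ω | Iq + ε / 2 < Zi n ω} with hpEdef
  have hpElim : Tendsto pE atTop (nhds 0) := hαS
  set bound : ℕ → ℝ := fun n => γq n + Real.exp (-(Real.exp ((n : ℝ) * (ε / 2)) / 2))
    + 2 * pE n + 2 * Real.sqrt (δ n) with hbdef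
  have hMn1 : ∀ n : ℕ, 0 < ⌈Real.exp ((n : ℝ) * (Iq + ε))⌉₊ :=
    fun n => Nat.ceil_pos.2 (Real.exp_pos _)
  -- the per-n construction
  have hmain : ∀ n : ℕ, ∃ (fn : (Fin n → 𝒳) → (Fin n → 𝒰)) (cb : Finset (Fin n → 𝒰)),
      (∀ x, fn x ∈ cb) ∧ cb.card ≤ ⌈Real.exp ((n : ℝ) * (Iq + ε))⌉₊ ∧
      (1 ≤ n → prEv (PXZ n) {p | Ψ n (p.2, fn p.1) = true} ≤ bound n) := by
    intro n
    rcases Nat.eq_zero_or_pos n with hn0 | hn1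
    · subst hn0
      refine ⟨fun _ => Fin.elim0, {Fin.elim0}, fun x => Finset.mem_singleton_self _, ?_, ?_⟩
      · rw [Finset.card_singleton]; exact hMn1 0
      · intro h; omega
    · have hMe : Real.exp ((n : ℝ) * (ε / 2))
          ≤ (⌈Real.exp ((n : ℝ) * (Iq + ε))⌉₊ : ℝ) * (Real.exp ((n : ℝ) * (Iq + ε / 2)))⁻¹ := by
        have h1 : Real.exp ((n : ℝ) * (Iq + ε)) ≤ (⌈Real.exp ((n : ℝ) * (Iq + ε))⌉₊ : ℝ) :=
          Nat.le_ceil _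
        have h2 : Real.exp ((n : ℝ) * (ε / 2))
            = Real.exp ((n : ℝ) * (Iq + ε)) * (Real.exp ((n : ℝ) * (Iq + ε / 2)))⁻¹ := by
          rw [← Real.exp_neg, ← Real.exp_add]; congr 1; ring
        rw [h2]
        exact mul_le_mul_of_nonneg_right h1 (inv_nonneg.2 (Real.exp_nonneg _))
      obtain ⟨f0, cb, hmem, hcard, hbnd⟩ := codebook_exists (PXZ n) (hPXZ n) (W n) (hW n)
        (PU n) (hPU n) (Ψ n) ⌈Real.exp ((n : ℝ) * (Iq + ε))⌉₊ (hMn1 n)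
        (Real.exp ((n : ℝ) * (Iq + ε / 2))) (γq n) (Real.exp ((n : ℝ) * (ε / 2)))
        (Real.exp_pos _) (hγpos n) (Real.exp_nonneg _) hMe
      refine ⟨f0, cb, hmem, hcard, ?_⟩
      intro hn
      -- rewrite the error probability as a double sum
      have herr : prEv (PXZ n) {p | Ψ n (p.2, f0 p.1) = true}
          = ∑ x, ∑ z, if Ψ n (z, f0 x) = true then PXZ n (x, z) else 0 := by
        simp only [prEv]
        rw [Fintype.sum_prod_type]
        refine Finset.sum_congr rfl fun x _ => Finset.sum_congr rfl fun z _ => ?_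
        rw [Set.indicator_apply]
        simp only [Set.mem_setOf_eq]
      -- the "atypicality" term is at most pE n
      have hT : (∑ x, ∑ u, ((∑ z, PXZ n (x, z)) * W n x u) *
            (if W n x u ≤ Real.exp ((n : ℝ) * (Iq + ε / 2)) * PU n u then 0 else 1)) ≤ pE n := by
        have hpEn : pE n = ∑ x, ∑ u, ∑ z,
            Set.indicator {ω | Iq + ε / 2 < Zi n ω} (μ n) (u, x, z) := by
          have hcomm : (∑ u, ∑ x, ∑ z,
              Set.indicator {ω | Iq + ε / 2 < Zi n ω} (μ n) (u, x, z))
              = ∑ x, ∑ u, ∑ z,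
              Set.indicator {ω | Iq + ε / 2 < Zi n ω} (μ n) (u, x, z) := Finset.sum_comm
          rw [show pE n = prEv (μ n) {ω | Iq + ε / 2 < Zi n ω} from rfl,
            prEv_eq_triple_sum, hcomm]
        rw [hpEn]
        refine Finset.sum_le_sum fun x _ => Finset.sum_le_sum fun u _ => ?_
        by_cases hcnd : W n x u ≤ Real.exp ((n : ℝ) * (Iq + ε / 2)) * PU n u
        · rw [if_pos hcnd, mul_zero]
          exact Finset.sum_nonneg fun z _ => Set.indicator_nonneg (fun ω _ => hμ0 n ω) _
        · rw [if_neg hcnd, mul_one]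
          rcases le_or_gt ((∑ z, PXZ n (x, z)) * W n x u) 0 with h0 | hpos
          · exact h0.trans
              (Finset.sum_nonneg fun z _ => Set.indicator_nonneg (fun ω _ => hμ0 n ω) _)
          · push_neg at hcnd
            have hPUpos : 0 < PU n u := by
              by_contra hP
              push_neg at hP
              have := hPUub n x u
              nlinarith [Real.exp_pos ((n : ℝ) * (Iq + ε / 2))]
            have hn0 : (0 : ℝ) < n := by exact_mod_cast hn1
            have hdiv : Real.exp ((n : ℝ) * (Iq + ε / 2)) < W n x u / PU n u :=
              (lt_div_iff₀ hPUpos).2 (by linarith [hcnd])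
            have hlog : (n : ℝ) * (Iq + ε / 2) < Real.log (W n x u / PU n u) := by
              have h6 := Real.log_lt_log (Real.exp_pos _) hdiv
              rwa [Real.log_exp] at h6
            have hninv : (1 / (n : ℝ)) * ((n : ℝ) * (Iq + ε / 2)) = Iq + ε / 2 := by
              field_simp
            have hzi : Iq + ε / 2 < (1 / (n : ℝ)) * Real.log (W n x u / PU n u) := by
              calc Iq + ε / 2 = (1 / (n : ℝ)) * ((n : ℝ) * (Iq + ε / 2)) := hninv.symm
              _ < (1 / (n : ℝ)) * Real.log (W n x u / PU n u) :=
                  mul_lt_mul_of_pos_left hlog (by positivity)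
            have hsum : ∑ z, Set.indicator {ω | Iq + ε / 2 < Zi n ω} (μ n) (u, x, z)
                = (∑ z, PXZ n (x, z)) * W n x u := by
              rw [Finset.sum_mul]
              refine Finset.sum_congr rfl fun z _ => ?_
              have hmemS : (u, x, z) ∈
                  {ω : (Fin n → 𝒰) × (Fin n → 𝒳) × (Fin n → 𝒵) | Iq + ε / 2 < Zi n ω} := hzi
              rw [Set.indicator_of_mem hmemS, hμ n u x z]
            rw [hsum]
      -- the joint error term equals δ n
      have hD : (∑ x, ∑ u, W n x u * (∑ z, if Ψ n (z, u) = true then PXZ n (x, z) else 0))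
          = δ n := by
        have hcomm : (∑ u, ∑ x, ∑ z,
            Set.indicator {ω : (Fin n → 𝒰) × (Fin n → 𝒳) × (Fin n → 𝒵) |
              Ψ n (ω.2.2, ω.1) = true} (μ n) (u, x, z))
            = ∑ x, ∑ u, ∑ z,
            Set.indicator {ω : (Fin n → 𝒰) × (Fin n → 𝒳) × (Fin n → 𝒵) |
              Ψ n (ω.2.2, ω.1) = true} (μ n) (u, x, z) := Finset.sum_comm
        rw [show δ n = prEv (μ n) {ω | Ψ n (ω.2.2, ω.1) = true} from rfl,
          prEv_eq_triple_sum, hcomm]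
        rw [eq_comm]
        refine Finset.sum_congr rfl fun x _ => Finset.sum_congr rfl fun u _ => ?_
        rw [Finset.mul_sum]
        refine Finset.sum_congr rfl fun z _ => ?_
        rw [Set.indicator_apply]
        simp only [Set.mem_setOf_eq]
        by_cases h : Ψ n (z, u) = true
        · rw [if_pos h, if_pos h, hμ n u x z]; ring
        · rw [if_neg h, if_neg h, mul_zero]
      have hgd : (2 / γq n) * δ n ≤ 2 * Real.sqrt (δ n) := by
        rcases eq_or_lt_of_le (hδ0 n) with h0 | hpos
        · rw [← h0]
          simp [Real.sqrt_zero]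
        · have hsq : 0 < Real.sqrt (δ n) := Real.sqrt_pos.2 hpos
          have hγge : Real.sqrt (δ n) ≤ γq n :=
            le_add_of_nonneg_right (by positivity)
          have h1 : (2 / γq n) * δ n ≤ (2 / Real.sqrt (δ n)) * δ n :=
            mul_le_mul_of_nonneg_right
              (div_le_div_of_nonneg_left (by norm_num) hsq hγge) (hδ0 n)
          have h2 : (2 / Real.sqrt (δ n)) * δ n = 2 * Real.sqrt (δ n) := by
            rw [div_mul_eq_mul_div, mul_div_assoc, Real.div_sqrt]
          linarith
      rw [hD] at hbnd
      show prEv (PXZ n) {p | Ψ n (p.2, f0 p.1) = true}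
        ≤ γq n + Real.exp (-(Real.exp ((n : ℝ) * (ε / 2)) / 2)) + 2 * pE n
          + 2 * Real.sqrt (δ n)
      rw [herr]
      have hexp2 : Real.exp (-(Real.exp ((n : ℝ) * (ε / 2)) / 2))
          = Real.exp (-(Real.exp ((n : ℝ) * (ε / 2)) / 2)) := rfl
      linarith [hbnd, hT, hgd]
  choose f cb hmem hcard herr using hmain
  refine ⟨f, cb, hmem, fun n => hcard n, ?_⟩
  refine squeeze_zero' (g := bound)
    (Eventually.of_forall fun n => prEv_nonneg ((hPXZ n).1) _) ?_ ?_
  · filter_upwards [eventually_ge_atTop 1] with n hn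
    exact herr n hn
  · -- bound tends to 0
    have hb1 : Tendsto (fun n => Real.sqrt (δ n)) atTop (nhds 0) := by
      have h := (Real.continuous_sqrt.tendsto 0).comp hδlim
      simpa [Function.comp_def] using h
    have hb2 : Tendsto (fun n : ℕ => 1 / ((n : ℝ) + 1)) atTop (nhds 0) :=
      tendsto_one_div_add_atTop_nhds_zero_nat
    have hb3 : Tendsto (fun n : ℕ => Real.exp (-(Real.exp ((n : ℝ) * (ε / 2)) / 2)))
        atTop (nhds 0) := by
      apply Real.tendsto_exp_atBot.comp
      have h1 : Tendsto (fun n : ℕ => (n : ℝ) * (ε / 2)) atTop atTop :=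
        tendsto_natCast_atTop_atTop.atTop_mul_const (half_pos hε)
      have h2 : Tendsto (fun n : ℕ => Real.exp ((n : ℝ) * (ε / 2))) atTop atTop :=
        Real.tendsto_exp_atTop.comp h1
      have h3 : Tendsto (fun n : ℕ => Real.exp ((n : ℝ) * (ε / 2)) / 2) atTop atTop :=
        h2.atTop_div_const (by norm_num)
      exact tendsto_neg_atBot_iff.2 h3
    have hbt : Tendsto bound atTop (nhds 0) := by
      have h := (((hb1.add hb2).add hb3).add (hpElim.const_mul 2)).add (hb1.const_mul 2)
      simp only [add_zero, mul_zero, zero_add] at h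
      exact h
    exact hbt

end
end

section
/- Let 𝒰 and 𝒴 be finite alphabets, n ≥ 1, and let P be a PMF on 𝒰^n × 𝒴^n with marginals P_U, P_Y and conditionals P_{U|Y}, P_{Y|U}. Let r > 0, r' ∈ ℝ, r̄₀ ∈ ℝ, ε > 0, and define T² = {(y,u) ∈ 𝒴^n × 𝒰^n : P_U(u) > 0, P_Y(y) > 0, and (1/n) log(P_{U|Y}(u|y)/P_U(u)) > r' − ε}. Let C ⊆ 𝒰^n be a codebook with |C| ≤ e^{n r̄₀}, let M₂ be an integer with M₂ ≥ e^{n r}, and let (B(u))_{u∈C} be bin indices, i.i.d. uniform on {1,…,M₂}. Let u* be a random element of C and Y a random element of 𝒴^n with law P_Y, such that the collection (B(u'))_{u' ∈ C, u' ≠ u*} is independent of the pair (Y, u*). Then P(∃ u' ∈ C with u' ≠ u*, B(u') = B(u*), and (Y, u') ∈ T²) ≤ e^{−n(r + r' − r̄₀ − ε)}. -/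
open Filter

noncomputable section

lemma count_lemma' {ι : Type*} [Fintype ι] [DecidableEq ι] {M : ℕ} (u' u₀ : ι) (hne : u' ≠ u₀) (x : ℝ) :
    ∑ b : ι → Fin M, (if b u' = b u₀ then x else 0)
      = (M : ℝ) ^ (Fintype.card ι - 1) * x := by
  classical
  rw [← Equiv.sum_comp (Equiv.funSplitAt u' (Fin M)).symm
    (fun b => if b u' = b u₀ then x else 0)]
  have h1 : ∀ p : Fin M × ({ j // j ≠ u' } → Fin M),
      (Equiv.funSplitAt u' (Fin M)).symm p u' = p.1 := by
    intro p; simp [Equiv.funSplitAt_symm_apply]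
  have h2 : ∀ p : Fin M × ({ j // j ≠ u' } → Fin M),
      (Equiv.funSplitAt u' (Fin M)).symm p u₀ = p.2 ⟨u₀, fun h => hne h.symm⟩ := by
    intro p
    rw [Equiv.funSplitAt_symm_apply, dif_neg (fun h => hne h.symm : u₀ ≠ u')]
  calc ∑ p : Fin M × ({ j // j ≠ u' } → Fin M),
        (if (Equiv.funSplitAt u' (Fin M)).symm p u'
            = (Equiv.funSplitAt u' (Fin M)).symm p u₀ then x else 0)
      = ∑ p : Fin M × ({ j // j ≠ u' } → Fin M),
        (if p.1 = p.2 ⟨u₀, fun h => hne h.symm⟩ then x else 0) := by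
        apply Finset.sum_congr rfl; intro p _; rw [h1, h2]
    _ = ∑ g : { j // j ≠ u' } → Fin M, ∑ a : Fin M,
        (if a = g ⟨u₀, fun h => hne h.symm⟩ then x else 0) := by
        rw [Fintype.sum_prod_type_right]
    _ = ∑ g : { j // j ≠ u' } → Fin M, x := by
        apply Finset.sum_congr rfl; intro g _
        simp [Finset.sum_ite_eq]
    _ = (M : ℝ) ^ (Fintype.card ι - 1) * x := by
        rw [Finset.sum_const, Finset.card_univ, Fintype.card_fun, Fintype.card_fin,
          nsmul_eq_mul]
        rw [Nat.cast_pow]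
        congr 2
        rw [Fintype.card_subtype_compl, Fintype.card_subtype_eq]

lemma typ_lemma' {α β : Type*} [Fintype α] [Fintype β] {n : ℕ} (hn : 1 ≤ n)
    (P : α × β → ℝ) (hP0 : ∀ p, 0 ≤ P p) (hP1 : ∑ p, P p = 1)
    (PU : α → ℝ) (hPU : ∀ u, PU u = ∑ y, P (u, y))
    (PY : β → ℝ) (hPY : ∀ y, PY y = ∑ u, P (u, y))
    (c : ℝ) (u' : α) :
    ∑ y, (if (0 < PU u' ∧ 0 < PY y ∧
        c < (1 / (n : ℝ)) * Real.log (P (u', y) / (PY y * PU u'))) then PY y else 0)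
      ≤ Real.exp (-((n : ℝ) * c)) := by
  classical
  have hn' : (0 : ℝ) < n := by exact_mod_cast hn
  have hPYnn : ∀ y, 0 ≤ PY y := fun y => by
    rw [hPY]; exact Finset.sum_nonneg fun u _ => hP0 _
  by_cases hc : 0 ≤ c
  · have key : ∀ y, (if (0 < PU u' ∧ 0 < PY y ∧
        c < (1 / (n : ℝ)) * Real.log (P (u', y) / (PY y * PU u'))) then PY y else 0)
        ≤ Real.exp (-((n : ℝ) * c)) * (P (u', y) / PU u') := by
      intro y
      split_ifs with h
      · obtain ⟨hPU', hPY', hlog⟩ := h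
        set x := P (u', y) / (PY y * PU u') with hx
        have hxnn : 0 ≤ x := div_nonneg (hP0 _) (by positivity)
        have hlog' : (n : ℝ) * c < Real.log x := by
          rw [one_div, inv_mul_eq_div, lt_div_iff₀ hn'] at hlog
          linarith [hlog]
        have hlogpos : 0 < Real.log x := lt_of_le_of_lt (by positivity) hlog'
        have hxpos : 0 < x := by
          rcases hxnn.lt_or_eq with h | h
          · exact h
          · exfalso; rw [← h, Real.log_zero] at hlogpos; exact lt_irrefl _ hlogpos
        have hEx : Real.exp ((n : ℝ) * c) < x := by
          calc Real.exp ((n : ℝ) * c) < Real.exp (Real.log x) := Real.exp_lt_exp.mpr hlog'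
            _ = x := Real.exp_log hxpos
        have h1 : PY y * PU u' * Real.exp ((n : ℝ) * c) < P (u', y) := by
          have := (lt_div_iff₀ (by positivity : (0:ℝ) < PY y * PU u')).mp hEx
          linarith [this]
        have h2 : PY y < P (u', y) / (PU u' * Real.exp ((n : ℝ) * c)) := by
          rw [lt_div_iff₀ (by positivity)]
          nlinarith [h1]
        have h3 : P (u', y) / (PU u' * Real.exp ((n : ℝ) * c))
            = Real.exp (-((n : ℝ) * c)) * (P (u', y) / PU u') := by
          rw [Real.exp_neg, ← div_div, div_eq_inv_mul]
        linarith [h2, h3 ▸ h2]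
      · have hPUnn : 0 ≤ PU u' := by
          rw [hPU]; exact Finset.sum_nonneg fun y _ => hP0 _
        exact mul_nonneg (Real.exp_nonneg _) (div_nonneg (hP0 _) hPUnn)
    calc ∑ y, (if (0 < PU u' ∧ 0 < PY y ∧
        c < (1 / (n : ℝ)) * Real.log (P (u', y) / (PY y * PU u'))) then PY y else 0)
        ≤ ∑ y, Real.exp (-((n : ℝ) * c)) * (P (u', y) / PU u') :=
          Finset.sum_le_sum fun y _ => key y
      _ = Real.exp (-((n : ℝ) * c)) * (PU u' / PU u') := by
          rw [← Finset.mul_sum, ← Finset.sum_div, ← hPU]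
      _ ≤ Real.exp (-((n : ℝ) * c)) * 1 :=
          mul_le_mul_of_nonneg_left (div_self_le_one _) (Real.exp_nonneg _)
      _ = Real.exp (-((n : ℝ) * c)) := mul_one _
  · have hsum : ∑ y, PY y = 1 := by
      simp_rw [hPY]
      rw [Finset.sum_comm]
      rw [← Fintype.sum_prod_type]
      exact hP1
    calc ∑ y, (if (0 < PU u' ∧ 0 < PY y ∧
        c < (1 / (n : ℝ)) * Real.log (P (u', y) / (PY y * PU u'))) then PY y else 0)
        ≤ ∑ y, PY y := Finset.sum_le_sum fun y _ => by
          split_ifs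
          · exact le_rfl
          · exact hPYnn y
      _ = 1 := hsum
      _ ≤ Real.exp (-((n : ℝ) * c)) := Real.one_le_exp (by nlinarith)

set_option maxHeartbeats 1000000 in
/-- Debinning (binning-error) bound: if a codebook `C` of at most `e^{n r̄₀}` codewords is
randomly binned into `M₂ ≥ e^{n r}` bins, i.i.d. uniformly and independently of the pair
`(Y, u*)` (where `u*` is a random codeword of `C` and `Y ~ P_Y`), then the probability that
some other codeword of the bin of `u*` is jointly typical with `Y` (i.e. lies in `T²`) is at
most `e^{-n(r + r' - r̄₀ - ε)}`. -/
theorem binning_error_bound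
    {𝒰 𝒴 : Type*} [Fintype 𝒰] [Fintype 𝒴] [DecidableEq 𝒰]
    {n : ℕ} (hn : 1 ≤ n)
    (P : (Fin n → 𝒰) × (Fin n → 𝒴) → ℝ) (hP : IsPMF P)
    (PU : (Fin n → 𝒰) → ℝ) (hPU : ∀ u, PU u = ∑ y, P (u, y))
    (PY : (Fin n → 𝒴) → ℝ) (hPY : ∀ y, PY y = ∑ u, P (u, y))
    (r r' rb ε : ℝ) (hr : 0 < r) (hε : 0 < ε)
    (T2 : Set ((Fin n → 𝒴) × (Fin n → 𝒰)))
    (hT2 : T2 = {p | 0 < PU p.2 ∧ 0 < PY p.1 ∧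
      r' - ε < (1 / (n : ℝ)) * Real.log (P (p.2, p.1) / (PY p.1 * PU p.2))})
    -- the codebook
    (C : Finset (Fin n → 𝒰)) (hC : (C.card : ℝ) ≤ Real.exp (n * rb))
    -- the number of bins
    (M₂ : ℕ) (hM : Real.exp (n * r) ≤ (M₂ : ℝ))
    -- the joint law of the pair (u*, Y): u* is a random element of C and Y ~ P_Y
    (ν : (Fin n → 𝒰) × (Fin n → 𝒴) → ℝ) (hν : IsPMF ν)
    (hνC : ∀ u y, u ∉ C → ν (u, y) = 0)
    (hνY : ∀ y, ∑ u, ν (u, y) = PY y)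
    -- the joint law of (bin assignment, (u*, Y)): the bins (B(u))_{u ∈ C} are i.i.d.
    -- uniform on Fin M₂ and the whole bin assignment is independent of (u*, Y)
    (μ : ({v // v ∈ C} → Fin M₂) × ((Fin n → 𝒰) × (Fin n → 𝒴)) → ℝ)
    (hμ : ∀ b p, μ (b, p) = ν p / (M₂ : ℝ) ^ C.card) :
    prEv μ {ω | ∃ u' : {v // v ∈ C}, (u' : Fin n → 𝒰) ≠ ω.2.1 ∧
        (∃ h : ω.2.1 ∈ C, ω.1 u' = ω.1 ⟨ω.2.1, h⟩) ∧ (ω.2.2, (u' : Fin n → 𝒰)) ∈ T2} ≤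
      Real.exp (-(n : ℝ) * (r + r' - rb - ε)) := by
  classical
  obtain ⟨hν0, hν1⟩ := hν
  obtain ⟨hP0, hP1⟩ := hP
  have hM0 : (0 : ℝ) < M₂ := lt_of_lt_of_le (Real.exp_pos _) hM
  have hMne : (M₂ : ℝ) ≠ 0 := ne_of_gt hM0
  have hμnn : ∀ ω, 0 ≤ μ ω := by
    rintro ⟨b, p⟩
    rw [hμ]
    exact div_nonneg (hν0 p) (by positivity)
  set F : {v // v ∈ C} → (({v // v ∈ C} → Fin M₂) × ((Fin n → 𝒰) × (Fin n → 𝒴))) → ℝ :=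
    fun u' ω => if ((u' : Fin n → 𝒰) ≠ ω.2.1 ∧ (∃ h : ω.2.1 ∈ C, ω.1 u' = ω.1 ⟨ω.2.1, h⟩)
      ∧ (ω.2.2, (u' : Fin n → 𝒰)) ∈ T2) then μ ω else 0 with hF
  have hFnn : ∀ u' ω, 0 ≤ F u' ω := by
    intro u' ω
    simp only [hF]
    split_ifs
    · exact hμnn ω
    · exact le_rfl
  -- Step 1: union bound
  have step1 : prEv μ {ω | ∃ u' : {v // v ∈ C}, (u' : Fin n → 𝒰) ≠ ω.2.1 ∧
        (∃ h : ω.2.1 ∈ C, ω.1 u' = ω.1 ⟨ω.2.1, h⟩) ∧ (ω.2.2, (u' : Fin n → 𝒰)) ∈ T2}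
      ≤ ∑ u' : {v // v ∈ C}, ∑ ω, F u' ω := by
    rw [prEv, Finset.sum_comm]
    apply Finset.sum_le_sum
    intro ω _
    rw [Set.indicator_apply]
    split_ifs with hω
    · obtain ⟨u', h1, h2, h3⟩ := hω
      have hev : F u' ω = μ ω := by simp only [hF]; exact if_pos ⟨h1, h2, h3⟩
      calc μ ω = F u' ω := hev.symm
        _ ≤ ∑ u'' : {v // v ∈ C}, F u'' ω :=
          Finset.single_le_sum (fun i _ => hFnn i ω) (Finset.mem_univ u')
    · exact Finset.sum_nonneg fun i _ => hFnn i ω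
  -- Step 2: per-codeword bound
  have step2 : ∀ u' : {v // v ∈ C}, ∑ ω, F u' ω ≤ Real.exp (-((n : ℝ) * (r' - ε))) / M₂ := by
    intro u'
    have hcard1 : 1 ≤ C.card := Finset.card_pos.mpr ⟨u'.1, u'.2⟩
    have hsum_b : ∀ p : (Fin n → 𝒰) × (Fin n → 𝒴),
        ∑ b : {v // v ∈ C} → Fin M₂, F u' (b, p)
        ≤ (if (p.2, (u' : Fin n → 𝒰)) ∈ T2 then ν p / M₂ else 0) := by
      rintro ⟨u, y⟩
      by_cases hT : ((y, (u' : Fin n → 𝒰)) ∈ T2)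
      · by_cases hu : u ∈ C
        · by_cases hne : (u' : Fin n → 𝒰) ≠ u
          · have hne' : u' ≠ (⟨u, hu⟩ : {v // v ∈ C}) := fun h => hne (by rw [h])
            have hFb : ∀ b : {v // v ∈ C} → Fin M₂, F u' (b, (u, y)) =
                (if b u' = b ⟨u, hu⟩ then ν (u, y) / (M₂ : ℝ) ^ C.card else 0) := by
              intro b
              simp only [hF]
              by_cases hb : b u' = b ⟨u, hu⟩
              · rw [if_pos ⟨hne, ⟨hu, hb⟩, hT⟩, if_pos hb, hμ]
              · rw [if_neg, if_neg hb]
                rintro ⟨-, ⟨h, hb'⟩, -⟩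
                exact hb hb'
            calc ∑ b : {v // v ∈ C} → Fin M₂, F u' (b, (u, y))
                = ∑ b : {v // v ∈ C} → Fin M₂,
                  (if b u' = b ⟨u, hu⟩ then ν (u, y) / (M₂ : ℝ) ^ C.card else 0) :=
                  Finset.sum_congr rfl fun b _ => hFb b
              _ = (M₂ : ℝ) ^ (Fintype.card {v // v ∈ C} - 1)
                  * (ν (u, y) / (M₂ : ℝ) ^ C.card) := count_lemma' u' ⟨u, hu⟩ hne' _
              _ = ν (u, y) / M₂ := by
                  rw [Fintype.card_coe]
                  rw [show ((M₂ : ℝ)) ^ C.card = (M₂ : ℝ) ^ (C.card - 1) * M₂ by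
                    rw [← pow_succ, Nat.sub_add_cancel hcard1]]
                  have hpne : ((M₂ : ℝ)) ^ (C.card - 1) ≠ 0 := by positivity
                  field_simp
              _ ≤ (if ((y, (u' : Fin n → 𝒰)) ∈ T2) then ν (u, y) / M₂ else 0) := by
                  rw [if_pos hT]
          · push_neg at hne
            have hz : ∑ b : {v // v ∈ C} → Fin M₂, F u' (b, (u, y)) = 0 :=
              Finset.sum_eq_zero fun b _ => by simp only [hF]; exact if_neg (fun h => h.1 hne)
            rw [hz, if_pos hT]
            exact div_nonneg (hν0 _) (le_of_lt hM0)
        · have hz : ∑ b : {v // v ∈ C} → Fin M₂, F u' (b, (u, y)) = 0 :=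
            Finset.sum_eq_zero fun b _ => by
              simp only [hF]
              apply if_neg
              rintro ⟨-, ⟨h, -⟩, -⟩
              exact hu h
          rw [hz, if_pos hT]
          exact div_nonneg (hν0 _) (le_of_lt hM0)
      · have hz : ∑ b : {v // v ∈ C} → Fin M₂, F u' (b, (u, y)) = 0 :=
          Finset.sum_eq_zero fun b _ => by simp only [hF]; exact if_neg (fun h => hT h.2.2)
        rw [hz, if_neg hT]
    calc ∑ ω, F u' ω
        = ∑ p : (Fin n → 𝒰) × (Fin n → 𝒴), ∑ b : {v // v ∈ C} → Fin M₂, F u' (b, p) := by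
          rw [Fintype.sum_prod_type, Finset.sum_comm]
      _ ≤ ∑ p : (Fin n → 𝒰) × (Fin n → 𝒴),
          (if (p.2, (u' : Fin n → 𝒰)) ∈ T2 then ν p / M₂ else 0) :=
          Finset.sum_le_sum fun p _ => hsum_b p
      _ = ∑ y : Fin n → 𝒴, ∑ u : Fin n → 𝒰,
          (if ((y, (u' : Fin n → 𝒰)) ∈ T2) then ν (u, y) / M₂ else 0) := by
          rw [Fintype.sum_prod_type, Finset.sum_comm]
      _ = ∑ y : Fin n → 𝒴, (if ((y, (u' : Fin n → 𝒰)) ∈ T2) then PY y else 0) / M₂ := by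
          refine Finset.sum_congr rfl fun y _ => ?_
          split_ifs
          · rw [← Finset.sum_div, hνY]
          · simp
      _ = (∑ y : Fin n → 𝒴, (if ((y, (u' : Fin n → 𝒰)) ∈ T2) then PY y else 0)) / M₂ := by
          rw [Finset.sum_div]
      _ ≤ Real.exp (-((n : ℝ) * (r' - ε))) / M₂ := by
          gcongr
          simp_rw [hT2, Set.mem_setOf_eq]
          exact typ_lemma' hn P hP0 hP1 PU hPU PY hPY (r' - ε) (u' : Fin n → 𝒰)
  -- Step 3: combine
  have hinv : (1 : ℝ) / M₂ ≤ Real.exp (-((n : ℝ) * r)) := by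
    rw [Real.exp_neg, ← one_div]
    exact one_div_le_one_div_of_le (Real.exp_pos _) hM
  calc prEv μ {ω | ∃ u' : {v // v ∈ C}, (u' : Fin n → 𝒰) ≠ ω.2.1 ∧
        (∃ h : ω.2.1 ∈ C, ω.1 u' = ω.1 ⟨ω.2.1, h⟩) ∧ (ω.2.2, (u' : Fin n → 𝒰)) ∈ T2}
      ≤ ∑ u' : {v // v ∈ C}, ∑ ω, F u' ω := step1
    _ ≤ ∑ _u' : {v // v ∈ C}, Real.exp (-((n : ℝ) * (r' - ε))) / M₂ :=
        Finset.sum_le_sum fun u' _ => step2 u'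
    _ = (C.card : ℝ) * (Real.exp (-((n : ℝ) * (r' - ε))) / M₂) := by
        rw [Finset.sum_const, Finset.card_univ, Fintype.card_coe, nsmul_eq_mul]
    _ ≤ Real.exp ((n : ℝ) * rb) * (Real.exp (-((n : ℝ) * (r' - ε))) * Real.exp (-((n : ℝ) * r))) := by
        apply mul_le_mul hC _ _ (Real.exp_nonneg _)
        · rw [div_eq_mul_one_div]
          exact mul_le_mul_of_nonneg_left hinv (Real.exp_nonneg _)
        · exact div_nonneg (Real.exp_nonneg _) (le_of_lt hM0)
    _ = Real.exp (-(n : ℝ) * (r + r' - rb - ε)) := by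
        rw [← Real.exp_add, ← Real.exp_add]
        congr 1
        ring


end
end
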